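/- Curtis–Hedlund–Lyndon theorem for cellular transformata: let S, T be finite sets and d ∈ ℕ. A map F : S^{ℤ^d} → T^{ℤ^d} is continuous (for the product topologies) and commutes with every shift (F ∘ σ_v = σ_v ∘ F for all v ∈ ℤ^d) if and only if F is a cellular transformaton. -/
import Mathlib


/-- Configurations of a `d`-dimensional cellular automaton over alphabet `S`. -/
abbrev Conf (d : ℕ) (S : Type) : Type := (Fin d → ℤ) → S

/-- The shift by a vector `v ∈ ℤ^d`: `(σ_v c)(w) = c(v + w)`. -/
def shift {d : ℕ} {S : Type} (v : Fin d → ℤ) (c : Conf d S) : Conf d S :=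
  fun w => c (v + w)

/-- A cellular transformaton (sliding block code). -/
def IsCellularTransformaton {d : ℕ} {S T : Type} (F : Conf d S → Conf d T) : Prop :=
  ∃ (k : ℕ) (n : Fin k → (Fin d → ℤ)) (f : (Fin k → S) → T),
    ∀ c v, F c v = f fun i => c (v + n i)

/-- **Curtis–Hedlund–Lyndon for cellular transformata.**
For finite alphabets `S, T` (with the discrete topology, configuration spaces carrying
the product topology), a map `F : S^{ℤ^d} → T^{ℤ^d}` is continuous and commutes with
every shift if and only if it is a cellular transformaton. -/
theorem curtis_hedlund_lyndon {d : ℕ} (S T : Type) [Finite S] [Finite T]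
    [TopologicalSpace S] [DiscreteTopology S]
    [TopologicalSpace T] [DiscreteTopology T]
    (F : Conf d S → Conf d T) :
    (Continuous F ∧ ∀ v : Fin d → ℤ, F ∘ shift v = shift v ∘ F) ↔
      IsCellularTransformaton F := by
  constructor
  · rintro ⟨hcont, hshift⟩
    -- g gives the value at the origin
    set g : Conf d S → T := fun c => F c 0 with hgdef
    have hgc : Continuous g := (continuous_apply (0 : Fin d → ℤ)).comp hcont
    have hFg : ∀ c v, F c v = g (shift v c) := by
      intro c v
      have h := congrFun (congrFun (hshift v) c) 0
      simp only [Function.comp_apply, shift, add_zero] at h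
      simpa [hgdef, shift] using h.symm
    rcases isEmpty_or_nonempty S with hS | hS
    · refine ⟨1, fun _ => 0, fun x => isEmptyElim (x 0), fun c _ => isEmptyElim (c 0)⟩
    · obtain ⟨s₀⟩ := hS
      -- locally constant: for each c a finite window determining g near c
      have key : ∀ c : Conf d S, ∃ I : Set (Fin d → ℤ), I.Finite ∧
          ∀ c' : Conf d S, (∀ w ∈ I, c' w = c w) → g c' = g c := by
        intro c
        have h1 : g ⁻¹' {g c} ∈ nhds c :=
          (hgc.isOpen_preimage _ (isOpen_discrete _)).mem_nhds rfl
        rw [nhds_pi, Filter.mem_pi] at h1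
        obtain ⟨I, hIfin, t, ht, hsub⟩ := h1
        refine ⟨I, hIfin, fun c' hc' => ?_⟩
        have hmem : c' ∈ I.pi t := by
          intro w hw
          have h2 := ht w
          rw [nhds_discrete, Filter.mem_pure] at h2
          rw [hc' w hw]
          exact h2
        exact hsub hmem
      choose I hIfin hI using key
      have hopen : ∀ c : Conf d S, IsOpen {c' : Conf d S | ∀ w ∈ I c, c' w = c w} := by
        intro c
        have heq : {c' : Conf d S | ∀ w ∈ I c, c' w = c w}
            = ⋂ w ∈ I c, (fun c' : Conf d S => c' w) ⁻¹' {c w} := by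
          ext c'; simp
        rw [heq]
        exact (hIfin c).isOpen_biInter fun w _ =>
          (continuous_apply w).isOpen_preimage _ (isOpen_discrete _)
      have hcover : (Set.univ : Set (Conf d S)) ⊆
          ⋃ c, {c' : Conf d S | ∀ w ∈ I c, c' w = c w} :=
        fun c _ => Set.mem_iUnion.2 ⟨c, fun w _ => rfl⟩
      obtain ⟨u, hu⟩ := isCompact_univ.elim_finite_subcover _ hopen hcover
      set W : Set (Fin d → ℤ) := ⋃ c ∈ u, I c with hWdef
      have hWfin : W.Finite := Set.Finite.biUnion u.finite_toSet (fun c _ => hIfin c)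
      have hW : ∀ c c' : Conf d S, (∀ w ∈ W, c' w = c w) → g c' = g c := by
        intro c c' h
        have hc := hu (Set.mem_univ c)
        simp only [Set.mem_iUnion, Set.mem_setOf_eq] at hc
        obtain ⟨j, hj, hcj⟩ := hc
        have h1 : g c = g j := hI j c hcj
        have h2 : g c' = g j := hI j c' (fun w hw => by
          rw [h w (Set.mem_biUnion hj hw), hcj w hw])
        rw [h1, h2]
      set Wfs := hWfin.toFinset with hWfs
      let e := Wfs.equivFin
      refine ⟨Wfs.card, fun i => ((e.symm i : Wfs) : Fin d → ℤ),
        fun x => g (fun w => if h : w ∈ Wfs then x (e ⟨w, h⟩) else s₀), ?_⟩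
      · intro c v
        rw [hFg c v]
        refine (hW (shift v c) _ ?_).symm
        intro w hw
        have hwfs : w ∈ Wfs := hWfin.mem_toFinset.mpr hw
        simp only [hwfs, dif_pos]
        have : ((e.symm (e ⟨w, hwfs⟩) : Wfs) : Fin d → ℤ) = w := by
          rw [Equiv.symm_apply_apply]
        rw [this]
        rfl
  · rintro ⟨k, n, f, hf⟩
    constructor
    · apply continuous_pi
      intro v
      have h1 : Continuous fun c : Conf d S => (fun i => c (v + n i) : Fin k → S) :=
        continuous_pi fun i => continuous_apply _
      have h2 : Continuous f := continuous_of_discreteTopology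
      have : (fun c : Conf d S => F c v) = fun c => f (fun i => c (v + n i)) := by
        ext c; exact hf c v
      rw [this]
      exact h2.comp h1
    · intro v
      funext c
      funext w
      simp only [Function.comp_apply, shift, hf]
      congr 1
      funext i
      congr 1
      ring
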